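/- Let p be a prime, let α be the automorphism of ℤ[1/p]² given by α(a,b) = (a+b, b), and let χ be a character of ℤ[1/p]², written χ(a,b) = χ₁(a)χ₂(b) for characters χ₁, χ₂ of ℤ[1/p]. If χ∘α^m = χ for some m ≥ 1 and m is the minimal such period, then χ₁ has order exactly m in the dual group, and p does not divide m. -/

import Mathlib

def Zp (p : ℕ) : AddSubgroup ℚ where
  carrier := {q : ℚ | ∃ (k : ℤ) (n : ℕ), q * (p : ℚ) ^ n = (k : ℚ)}
  zero_mem' := ⟨0, 0, by norm_num⟩
  add_mem' := by
    rintro a b ⟨k1, n1, h1⟩ ⟨k2, n2, h2⟩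
    refine ⟨k1 * (p : ℤ) ^ n2 + k2 * (p : ℤ) ^ n1, n1 + n2, ?_⟩
    push_cast
    calc (a + b) * (p : ℚ) ^ (n1 + n2)
        = a * (p : ℚ) ^ n1 * (p : ℚ) ^ n2 + b * (p : ℚ) ^ n2 * (p : ℚ) ^ n1 := by
          rw [pow_add]; ring
      _ = (k1 : ℚ) * (p : ℚ) ^ n2 + (k2 : ℚ) * (p : ℚ) ^ n1 := by rw [h1, h2]
  neg_mem' := by
    rintro a ⟨k, n, h⟩
    refine ⟨-k, n, ?_⟩
    push_cast
    rw [neg_mul, h]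


/-- The automorphism `α(a,b) = (a+b, b)` of `ℤ[1/p]²`. -/
def alphaAut (p : ℕ) : AddAut (Zp p × Zp p) where
  toFun x := (x.1 + x.2, x.2)
  invFun x := (x.1 - x.2, x.2)
  left_inv x := by
    refine Prod.ext ?_ rfl
    show x.1 + x.2 - x.2 = x.1
    abel
  right_inv x := by
    refine Prod.ext ?_ rfl
    show x.1 - x.2 + x.2 = x.1
    abel
  map_add' x y := by
    refine Prod.ext ?_ rfl
    show x.1 + y.1 + (x.2 + y.2) = x.1 + x.2 + (y.1 + y.2)
    abel

lemma alphaAut_pow (p : ℕ) (j : ℕ) (x : Zp p × Zp p) :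
    (j • alphaAut p) x = (x.1 + j • x.2, x.2) := by
  induction j with
  | zero => simp
  | succ n ih =>
    rw [succ_nsmul', AddAut.add_apply, ih]
    refine Prod.ext ?_ rfl
    show x.1 + n • x.2 + x.2 = x.1 + (n + 1) • x.2
    rw [succ_nsmul]; abel

lemma per_iff (p : ℕ) (χ : AddChar (Zp p × Zp p) Circle) (χ₁ χ₂ : AddChar (Zp p) Circle)
    (hfact : ∀ a b : Zp p, χ (a, b) = χ₁ a * χ₂ b) (j : ℕ) :
    (∀ x : Zp p × Zp p, χ ((j • alphaAut p) x) = χ x) ↔ (∀ x : Zp p, χ₁ x ^ j = 1) := by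
  constructor
  · intro h b
    have := h (0, b)
    rw [alphaAut_pow] at this
    simp only [hfact] at this
    rw [← AddChar.map_nsmul_eq_pow]
    have h2 : χ₁ (0 + j • b) = χ₁ 0 := mul_right_cancel this
    simpa using h2
  · intro h x
    rw [alphaAut_pow, hfact, hfact, AddChar.map_add_eq_mul, AddChar.map_nsmul_eq_pow, h x.2,
      mul_one]

/-- if a character `χ = χ₁ ⊗ χ₂` of `ℤ[1/p]²` is periodic for the dual
action of `α`, with minimal period `m ≥ 1`, then `χ₁` has order exactly `m` and `p ∤ m`. -/
theorem periodic_point_dual_action (p : ℕ) (hp : p.Prime)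
    (χ : AddChar (Zp p × Zp p) Circle) (χ₁ χ₂ : AddChar (Zp p) Circle)
    (hfact : ∀ a b : Zp p, χ (a, b) = χ₁ a * χ₂ b)
    (m : ℕ) (hm : 1 ≤ m)
    (hper : ∀ x : Zp p × Zp p, χ ((m • alphaAut p) x) = χ x)
    (hmin : ∀ j : ℕ, 1 ≤ j → (∀ x : Zp p × Zp p, χ ((j • alphaAut p) x) = χ x) → m ≤ j) :
    ((∀ x : Zp p, χ₁ x ^ m = 1) ∧
      ∀ j : ℕ, 1 ≤ j → (∀ x : Zp p, χ₁ x ^ j = 1) → m ≤ j) ∧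
    ¬ (p ∣ m) := by
  have key := per_iff p χ χ₁ χ₂ hfact
  have hord : ∀ x : Zp p, χ₁ x ^ m = 1 := (key m).mp hper
  refine ⟨⟨hord, fun j hj hjord => hmin j hj ((key j).mpr hjord)⟩, ?_⟩
  rintro ⟨m', rfl⟩
  have hp0 : (p : ℚ) ≠ 0 := Nat.cast_ne_zero.mpr hp.pos.ne'
  have hm' : 1 ≤ m' := by
    rcases Nat.eq_zero_or_pos m' with h | h
    · simp [h] at hm
    · exact h
  -- every x is divisible by p in Zp p
  have hdiv : ∀ x : Zp p, ∃ y : Zp p, p • y = x := by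
    rintro ⟨x, k, n, hx⟩
    refine ⟨⟨x / p, k, n + 1, ?_⟩, ?_⟩
    · rw [pow_succ]
      field_simp
      exact hx
    · ext
      push_cast
      rw [nsmul_eq_mul]
      field_simp
  have hord' : ∀ x : Zp p, χ₁ x ^ m' = 1 := by
    intro x
    obtain ⟨y, hy⟩ := hdiv x
    rw [← AddChar.map_nsmul_eq_pow, ← hy, ← mul_nsmul', mul_comm, AddChar.map_nsmul_eq_pow,
      hord y]
  have := hmin m' hm' ((key m').mpr hord')
  have hlt : m' < p * m' := by
    have := hp.two_le
    nlinarith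
  omega
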